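/- Under the stated setup, for every ρ with 1 < ρ < r there exists a constant C ≥ 0 such that |K(i,j)| ≤ C ρ^{-(i+j+1)} for all integers i, j ≥ 0; in particular Σ_{i≥0} Σ_{j≥0} |K(i,j)| < ∞. -/

import Mathlib

open Complex

private lemma zpow_split (ρ : ℝ) (i j : ℕ) :
    ρ ^ (-((i : ℤ) + j + 1)) = ρ⁻¹ * (ρ⁻¹) ^ i * (ρ⁻¹) ^ j := by
  rw [zpow_neg, show ((i : ℤ) + j + 1) = ((i + j + 1 : ℕ) : ℤ) by push_cast; ring,
    zpow_natCast, ← inv_pow, pow_add, pow_add, pow_one]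
  ring

theorem kernel_decay_bound
    (r : ℝ) (hr : 1 < r)
    (vp vm : ℕ → ℂ)
    (hvp : Summable fun k : ℕ => ‖vp (k + 1)‖ * r ^ (k + 1))
    (hvm : Summable fun k : ℕ => ‖vm (k + 1)‖ * r ^ (k + 1))
    (Vs : ℂ → ℂ)
    (hVs : ∀ ζ : ℂ, r⁻¹ < ‖ζ‖ → ‖ζ‖ < r →
      Vs ζ = (∑' k : ℕ, (-1 : ℂ) ^ (k + 1) * vm (k + 1) * ζ ^ (-((k : ℤ) + 1))) -
             ∑' k : ℕ, (-1 : ℂ) ^ (k + 1) * vp (k + 1) * ζ ^ (k + 1))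
    (ρ : ℝ) (hρ1 : 1 < ρ) (hρr : ρ < r)
    (K : ℤ → ℤ → ℂ)
    (hK : ∀ i j : ℤ, 0 ≤ i → 0 ≤ j →
      K i j = ((2 * Real.pi * Complex.I)⁻¹) ^ 2 *
        ∮ ζ in C(0, ρ), (∮ η in C(0, ρ⁻¹),
          Complex.exp (Vs ζ - Vs η) * (ζ - η)⁻¹ * ζ ^ (-i - 1) * η ^ j)) :
    (∃ C : ℝ, 0 ≤ C ∧ ∀ i j : ℤ, 0 ≤ i → 0 ≤ j →
      ‖K i j‖ ≤ C * ρ ^ (-(i + j + 1))) ∧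
    Summable fun p : ℕ × ℕ => ‖K p.1 p.2‖ := by
  have hr0 : (0:ℝ) < r := lt_trans one_pos hr
  have hρ0 : (0:ℝ) < ρ := lt_trans one_pos hρ1
  have hρne : ρ ≠ 0 := ne_of_gt hρ0
  have hρinv0 : (0:ℝ) < ρ⁻¹ := inv_pos.mpr hρ0
  have hρinv1 : ρ⁻¹ < 1 := inv_lt_one_of_one_lt₀ hρ1
  have hgap : (0:ℝ) < ρ - ρ⁻¹ := by linarith
  set Mm := ∑' k : ℕ, ‖vm (k + 1)‖ * r ^ (k + 1) with hMm
  set Mp := ∑' k : ℕ, ‖vp (k + 1)‖ * r ^ (k + 1) with hMp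
  set M := Mm + Mp with hM
  -- bound on Vs on the annulus
  have hVsb : ∀ z : ℂ, r⁻¹ < ‖z‖ → ‖z‖ < r → ‖Vs z‖ ≤ M := by
    intro z h1 h2
    have hz0 : (0:ℝ) < ‖z‖ := lt_trans (inv_pos.mpr hr0) h1
    have hzinv : ‖z‖⁻¹ ≤ r := by
      have := inv_strictAnti₀ (inv_pos.mpr hr0) h1
      rw [inv_inv] at this
      exact this.le
    rw [hVs z h1 h2]
    have b1 : ‖∑' k : ℕ, (-1 : ℂ) ^ (k + 1) * vm (k + 1) * z ^ (-((k : ℤ) + 1))‖ ≤ Mm := by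
      refine tsum_of_norm_bounded hvm.hasSum fun k => ?_
      have : ‖z ^ (-((k : ℤ) + 1))‖ ≤ r ^ (k + 1) := by
        rw [norm_zpow, show (-((k : ℤ) + 1)) = -((k + 1 : ℕ) : ℤ) by push_cast; ring,
          zpow_neg, zpow_natCast, ← inv_pow]
        exact pow_le_pow_left₀ (inv_nonneg.mpr hz0.le) hzinv _
      calc ‖(-1 : ℂ) ^ (k + 1) * vm (k + 1) * z ^ (-((k : ℤ) + 1))‖
          = ‖vm (k + 1)‖ * ‖z ^ (-((k : ℤ) + 1))‖ := by
            rw [norm_mul, norm_mul, norm_pow, norm_neg, norm_one, one_pow, one_mul]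
        _ ≤ ‖vm (k + 1)‖ * r ^ (k + 1) :=
            mul_le_mul_of_nonneg_left this (norm_nonneg _)
    have b2 : ‖∑' k : ℕ, (-1 : ℂ) ^ (k + 1) * vp (k + 1) * z ^ (k + 1)‖ ≤ Mp := by
      refine tsum_of_norm_bounded hvp.hasSum fun k => ?_
      have : ‖z ^ (k + 1)‖ ≤ r ^ (k + 1) := by
        rw [norm_pow]
        exact pow_le_pow_left₀ hz0.le h2.le _
      calc ‖(-1 : ℂ) ^ (k + 1) * vp (k + 1) * z ^ (k + 1)‖
          = ‖vp (k + 1)‖ * ‖z ^ (k + 1)‖ := by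
            rw [norm_mul, norm_mul, norm_pow, norm_neg, norm_one, one_pow, one_mul]
        _ ≤ ‖vp (k + 1)‖ * r ^ (k + 1) :=
            mul_le_mul_of_nonneg_left this (norm_nonneg _)
    calc ‖_ - _‖ ≤ _ + _ := norm_sub_le _ _
      _ ≤ Mm + Mp := add_le_add b1 b2
    -- note: might need explicit terms
  have hρnorm : ‖(ρ : ℂ)‖ = ρ := by
    rw [Complex.norm_real, Real.norm_eq_abs, abs_of_pos hρ0]
  have hM0 : 0 ≤ M := le_trans (norm_nonneg (Vs ρ)) (hVsb ρ (by
      rw [hρnorm]; exact lt_trans (inv_lt_one_of_one_lt₀ hr) hρ1) (by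
      rw [hρnorm]; exact hρr))
  set E := Real.exp (2 * M) * (ρ - ρ⁻¹)⁻¹ with hE
  have hE0 : 0 ≤ E := mul_nonneg (Real.exp_nonneg _) (inv_nonneg.mpr hgap.le)
  -- key bound
  have key : ∀ i j : ℤ, 0 ≤ i → 0 ≤ j → ‖K i j‖ ≤ E * ρ ^ (-(i + j + 1)) := by
    intro i j hi hj
    rw [hK i j hi hj, norm_mul]
    set B := E * (ρ ^ (-i - 1) * ρ ^ (-j)) with hB
    have hB0 : 0 ≤ B := by
      apply mul_nonneg hE0
      positivity
    have inner_bound : ∀ ζ ∈ Metric.sphere (0:ℂ) ρ,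
        ‖∮ η in C(0, ρ⁻¹),
          Complex.exp (Vs ζ - Vs η) * (ζ - η)⁻¹ * ζ ^ (-i - 1) * η ^ j‖
          ≤ 2 * Real.pi * ρ⁻¹ * B := by
      intro ζ hζ
      rw [mem_sphere_zero_iff_norm] at hζ
      have hbound : ∀ η ∈ Metric.sphere (0:ℂ) ρ⁻¹,
          ‖Complex.exp (Vs ζ - Vs η) * (ζ - η)⁻¹ * ζ ^ (-i - 1) * η ^ j‖ ≤ B := by
        intro η hη
        rw [mem_sphere_zero_iff_norm] at hη
        have hζ1 : r⁻¹ < ‖ζ‖ := by rw [hζ]; exact lt_trans (inv_lt_one_of_one_lt₀ hr) hρ1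
        have hζ2 : ‖ζ‖ < r := by rw [hζ]; exact hρr
        have hη1 : r⁻¹ < ‖η‖ := by rw [hη]; exact inv_strictAnti₀ hρ0 hρr
        have hη2 : ‖η‖ < r := by rw [hη]; exact lt_trans hρinv1 hr
        have hexp : ‖Complex.exp (Vs ζ - Vs η)‖ ≤ Real.exp (2 * M) := by
          rw [Complex.norm_exp]
          apply Real.exp_le_exp.mpr
          calc (Vs ζ - Vs η).re ≤ ‖Vs ζ - Vs η‖ := Complex.re_le_norm _
            _ ≤ ‖Vs ζ‖ + ‖Vs η‖ := norm_sub_le _ _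
            _ ≤ M + M := add_le_add (hVsb ζ hζ1 hζ2) (hVsb η hη1 hη2)
            _ = 2 * M := by ring
        have hinv : ‖(ζ - η)⁻¹‖ ≤ (ρ - ρ⁻¹)⁻¹ := by
          rw [norm_inv]
          apply inv_anti₀ hgap
          calc ρ - ρ⁻¹ = ‖ζ‖ - ‖η‖ := by rw [hζ, hη]
            _ ≤ ‖ζ - η‖ := by
              have := norm_sub_norm_le ζ η
              linarith [abs_le.mp (abs_norm_sub_norm_le ζ η)]
        have hζp : ‖ζ ^ (-i - 1)‖ = ρ ^ (-i - 1) := by rw [norm_zpow, hζ]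
        have hηp : ‖η ^ j‖ = ρ⁻¹ ^ j := by rw [norm_zpow, hη]
        have hηp' : (ρ⁻¹ : ℝ) ^ j = ρ ^ (-j) := inv_zpow' ρ j
        rw [norm_mul, norm_mul, norm_mul, hζp, hηp, hηp']
        rw [hB, hE]
        calc ‖Complex.exp (Vs ζ - Vs η)‖ * ‖(ζ - η)⁻¹‖ * ρ ^ (-i - 1) * ρ ^ (-j)
            ≤ Real.exp (2 * M) * (ρ - ρ⁻¹)⁻¹ * ρ ^ (-i - 1) * ρ ^ (-j) := by
              have h1 : (0:ℝ) ≤ ρ ^ (-i - 1) := le_of_lt (zpow_pos hρ0 _)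
              have h2 : (0:ℝ) ≤ ρ ^ (-j) := le_of_lt (zpow_pos hρ0 _)
              apply mul_le_mul_of_nonneg_right _ h2
              apply mul_le_mul_of_nonneg_right _ h1
              exact mul_le_mul hexp hinv (norm_nonneg _) (Real.exp_nonneg _)
          _ = Real.exp (2 * M) * (ρ - ρ⁻¹)⁻¹ * (ρ ^ (-i - 1) * ρ ^ (-j)) := by ring
      exact circleIntegral.norm_integral_le_of_norm_le_const hρinv0.le hbound
    have outer_bound :
        ‖∮ ζ in C(0, ρ), (∮ η in C(0, ρ⁻¹),
          Complex.exp (Vs ζ - Vs η) * (ζ - η)⁻¹ * ζ ^ (-i - 1) * η ^ j)‖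
          ≤ 2 * Real.pi * ρ * (2 * Real.pi * ρ⁻¹ * B) := by
      exact circleIntegral.norm_integral_le_of_norm_le_const hρ0.le inner_bound
    have hc : ‖((2 * (Real.pi:ℂ) * Complex.I)⁻¹) ^ 2‖ = ((2 * Real.pi)⁻¹) ^ 2 := by
      rw [norm_pow, norm_inv]
      congr 2
      simp [_root_.abs_of_nonneg Real.pi_nonneg]
    calc ‖((2 * (Real.pi:ℂ) * Complex.I)⁻¹) ^ 2‖ *
          ‖∮ ζ in C(0, ρ), (∮ η in C(0, ρ⁻¹),
            Complex.exp (Vs ζ - Vs η) * (ζ - η)⁻¹ * ζ ^ (-i - 1) * η ^ j)‖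
        ≤ ((2 * Real.pi)⁻¹) ^ 2 * (2 * Real.pi * ρ * (2 * Real.pi * ρ⁻¹ * B)) := by
          rw [hc]
          exact mul_le_mul_of_nonneg_left outer_bound (by positivity)
      _ = B := by
          have hπ : Real.pi ≠ 0 := Real.pi_ne_zero
          field_simp
      _ = E * ρ ^ (-(i + j + 1)) := by
          rw [hB, ← zpow_add₀ hρne]
          congr 2
          ring
  constructor
  · exact ⟨E, hE0, key⟩
  · have hg : Summable fun p : ℕ × ℕ => (ρ⁻¹) ^ p.1 * (ρ⁻¹) ^ p.2 :=
      Summable.mul_of_nonneg (summable_geometric_of_lt_one hρinv0.le hρinv1)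
        (summable_geometric_of_lt_one hρinv0.le hρinv1)
        (fun _ => by positivity) (fun _ => by positivity)
    have hf : Summable fun p : ℕ × ℕ => E * ρ ^ (-((p.1 : ℤ) + p.2 + 1)) := by
      refine (hg.mul_left (E * ρ⁻¹)).congr fun p => ?_
      rw [zpow_split ρ p.1 p.2]
      ring
    exact hf.of_nonneg_of_le (fun p => norm_nonneg _)
      (fun p => key p.1 p.2 (Int.natCast_nonneg _) (Int.natCast_nonneg _))
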